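/- Let (l_t)_{t≥1} be a sequence of nonnegative reals satisfying l_{t+1} ≤ l_t (1 − c/t) + b/t² for all t ≥ 1, where 1 < c < 2 and b > 0. Then for all t ≥ 2, l_t ≤ 4b/((c−1) t). -/
import Mathlib


/-- Corollary `boundpowerk`: a nonnegative sequence satisfying the recursion
`l_{t+1} ≤ l_t (1 - c/t) + b/t²` with `1 < c < 2` and `b > 0` satisfies
`l_t ≤ 4b/((c-1)t)` for all `t ≥ 2`. -/
theorem recursive_sequence_bound (l : ℕ → ℝ) (b c : ℝ)
    (hc1 : 1 < c) (hc2 : c < 2) (hb : 0 < b)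
    (hnonneg : ∀ t, 0 ≤ l t)
    (hrec : ∀ t : ℕ, 1 ≤ t →
      l (t + 1) ≤ l t * (1 - c / t) + b / (t : ℝ) ^ 2) :
    ∀ t : ℕ, 2 ≤ t → l t ≤ 4 * b / ((c - 1) * t) := by
  intro t ht
  induction t, ht using Nat.le_induction with
  | base =>
    have h1 := hrec 1 le_rfl
    have h0 := hnonneg 1
    push_cast at h1
    have hl2 : l 2 ≤ b := by nlinarith
    have hpos : (0:ℝ) < (c - 1) * 2 := by nlinarith
    push_cast
    rw [le_div_iff₀ hpos]
    nlinarith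
  | succ n hn ih =>
    have h2 : (2:ℝ) ≤ (n:ℝ) := by exact_mod_cast hn
    have hnpos : (0:ℝ) < (n:ℝ) := by linarith
    have hfac : (0:ℝ) ≤ 1 - c / (n:ℝ) := by
      rw [sub_nonneg, div_le_one hnpos]; linarith
    have hr := hrec n (by omega)
    have hchain : l (n+1) ≤ (4 * b / ((c - 1) * n)) * (1 - c / n) + b / (n:ℝ)^2 :=
      hr.trans (by gcongr)
    refine hchain.trans ?_
    have hc1' : (0:ℝ) < c - 1 := by linarith
    have hpos1 : (0:ℝ) < (c - 1) * ((n:ℝ) + 1) := by positivity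
    have hpos2 : (0:ℝ) < (c - 1) * (n:ℝ) := by positivity
    push_cast
    have hfac' : 1 - c/(n:ℝ) = ((n:ℝ) - c)/(n:ℝ) := by field_simp
    rw [hfac', div_mul_div_comm, div_add_div _ _ (by positivity) (by positivity),
      div_le_div_iff₀ (by positivity) hpos1]
    have key : (0:ℝ) < b * (c - 1) * ((n:ℝ) * (n:ℝ)) * (3 * (n:ℝ) * (c - 1) + 3 * c + 1) := by
      have : (0:ℝ) < 3 * (n:ℝ) * (c - 1) + 3 * c + 1 := by nlinarith
      positivity
    nlinarith [key]
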